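/- Let H ⊆ ℝⁿ be the affine plane {λE + μI − T : λ, μ ∈ ℝ} with E = (e^{k t₁}, …, e^{k tₙ}), k < 0, t₁ < ⋯ < tₙ, I = (1,…,1). If x ∈ H and there exist indices 1 ≤ i < j < m ≤ n with x_i = −x_j = x_m = ±‖x‖_∞, then x is the unique element of minimal max-norm in H. -/
import Mathlib


theorem stmt_2 (n : ℕ) (t : Fin n → ℝ) (ht : StrictMono t) (k : ℝ) (hk : k < 0)
    (T : Fin n → ℝ) (x : Fin n → ℝ)
    (E : Fin n → ℝ) (hE : E = fun i => Real.exp (k * t i))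
    (H : Set (Fin n → ℝ))
    (hH : H = {y | ∃ l m : ℝ, y = l • E + m • (fun _ => (1 : ℝ)) - T})
    (hx : x ∈ H)
    (halt : ∃ i j m : Fin n, i < j ∧ j < m ∧
      ((x i = ‖x‖ ∧ x j = -‖x‖ ∧ x m = ‖x‖) ∨ (x i = -‖x‖ ∧ x j = ‖x‖ ∧ x m = -‖x‖))) :
    ∀ y ∈ H, y ≠ x → ‖x‖ < ‖y‖ := by
  intro y hy hyx
  by_contra hlt
  push_neg at hlt
  subst hH hE
  obtain ⟨lx, mx, hxeq⟩ := hx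
  obtain ⟨ly, my, hyeq⟩ := hy
  obtain ⟨i, j, m, hij, hjm, hcase⟩ := halt
  have hd : ∀ s, y s - x s = (ly - lx) * Real.exp (k * t s) + (my - mx) := by
    intro s
    have hxs : x s = lx * Real.exp (k * t s) + mx - T s := by rw [hxeq]; simp
    have hys : y s = ly * Real.exp (k * t s) + my - T s := by rw [hyeq]; simp
    rw [hxs, hys]; ring
  set a := ly - lx with ha
  set b := my - mx with hb
  have hbound : ∀ s, |y s| ≤ ‖x‖ := fun s => by
    calc |y s| = ‖y s‖ := (Real.norm_eq_abs _).symm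
    _ ≤ ‖y‖ := norm_le_pi_norm y s
    _ ≤ ‖x‖ := hlt
  have hij' : Real.exp (k * t j) < Real.exp (k * t i) :=
    Real.exp_lt_exp.mpr (by nlinarith [ht hij])
  have hjm' : Real.exp (k * t m) < Real.exp (k * t j) :=
    Real.exp_lt_exp.mpr (by nlinarith [ht hjm])
  have hi := abs_le.mp (hbound i)
  have hj := abs_le.mp (hbound j)
  have hm := abs_le.mp (hbound m)
  have hdi := hd i; have hdj := hd j; have hdm := hd m
  -- derive sign facts on d at i, j, m and get a contradiction
  rcases lt_trichotomy a 0 with hA | hA | hA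
  · rcases hcase with ⟨h1, h2, h3⟩ | ⟨h1, h2, h3⟩
    · nlinarith [hj.1, hm.2, hjm']
    · nlinarith [hi.2, hj.1, hij']
  · -- a = 0, so d is constant b; alternation forces b = 0 hence y = x
    have hd0 : ∀ s, y s - x s = b := by intro s; rw [hd s, hA]; ring
    have hb0 : b = 0 := by
      rcases hcase with ⟨h1, h2, h3⟩ | ⟨h1, h2, h3⟩
      · linarith [hi.2, hj.1, hd0 i, hd0 j]
      · linarith [hi.1, hj.2, hd0 i, hd0 j]
    exact hyx (funext fun s => by linarith [hd0 s])
  · rcases hcase with ⟨h1, h2, h3⟩ | ⟨h1, h2, h3⟩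
    · nlinarith [hi.2, hj.1, hij']
    · nlinarith [hj.2, hm.1, hjm']
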